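/- arXiv:0906.0180 — 4 statements merged into one kernel-verified Lean document; each statement's English description precedes it below -/
import Mathlib

section
/- Let η* be non-decreasing on (0,π] with η*(x) → 0 as x → 0, let |η| ≤ η*, let L(x) = exp(-∫_x^π η(s)/s ds), and let f(x) = x^{-α} L(x) with α ∈ [-1+δ, 1-δ] for some δ ∈ (0,1). Then ∫_0^π f(x) dx ≤ C, where C depends only on η* and δ (uniformly in α and η). -/
open Real MeasureTheory Filter Set

theorem integral_spectral_density_uniformly_bounded
    (ηs : ℝ → ℝ) (δ : ℝ) (hδ : δ ∈ Ioo (0:ℝ) 1)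
    (hmono : MonotoneOn ηs (Ioc 0 π))
    (hlim : Tendsto ηs (nhdsWithin 0 (Ioi 0)) (nhds 0)) :
    ∃ C : ℝ,
      ∀ η : ℝ → ℝ, Measurable η → (∀ s ∈ Ioc (0:ℝ) π, |η s| ≤ ηs s) →
        ∀ α ∈ Icc (-1 + δ) (1 - δ),
          ∫ x in Ioc (0:ℝ) π, x ^ (-α) * Real.exp (-∫ s in x..π, η s / s) ≤ C := by
  obtain ⟨hδ0, hδ1⟩ := hδ
  have hπ : (0:ℝ) < π := pi_pos
  have hπ1 : (1:ℝ) ≤ π := by linarith [pi_gt_three]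
  -- choose x₁ from the limit
  rw [Metric.tendsto_nhdsWithin_nhds] at hlim
  obtain ⟨x₁, hx₁0, hx₁⟩ := hlim (δ/2) (by linarith)
  set x₀ : ℝ := min (x₁/2) π with hx₀def
  have hx₀0 : 0 < x₀ := lt_min (by linarith) hπ
  have hsmall : ∀ s ∈ Ioc (0:ℝ) x₀, ηs s ≤ δ/2 := by
    intro s hs
    have hd : dist s 0 < x₁ := by
      rw [Real.dist_eq, sub_zero, abs_of_pos hs.1]
      calc s ≤ x₀ := hs.2
        _ ≤ x₁/2 := min_le_left _ _
        _ < x₁ := by linarith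
    have h2 := hx₁ (mem_Ioi.mpr hs.1) hd
    rw [Real.dist_eq, sub_zero] at h2
    exact (le_abs_self _).trans h2.le
  set M : ℝ := max (ηs π) 0 with hMdef
  have hM0 : 0 ≤ M := le_max_right _ _
  have hMb : ∀ s ∈ Ioc (0:ℝ) π, ηs s ≤ M :=
    fun s hs => le_trans (hmono hs (right_mem_Ioc.mpr hπ) hs.2) (le_max_left _ _)
  have hkey : ∀ s ∈ Ioc (0:ℝ) π, ηs s ≤ δ/2 + (M/x₀) * s := by
    intro s hs
    rcases le_or_gt s x₀ with h | h
    · have h1 := hsmall s ⟨hs.1, h⟩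
      have h2 : 0 ≤ (M/x₀) * s := mul_nonneg (div_nonneg hM0 hx₀0.le) hs.1.le
      linarith
    · have h1 : ηs s ≤ M := hMb s hs
      have h2 : M ≤ (M/x₀) * s := by
        rw [div_mul_eq_mul_div, le_div_iff₀ hx₀0]
        exact mul_le_mul_of_nonneg_left h.le hM0
      linarith
  set E : ℝ := Real.exp (M/x₀ * π) with hEdef
  have hE0 : 0 ≤ E := (Real.exp_pos _).le
  set K : ℝ := E * π ^ (δ/2) * π ^ (2:ℝ) with hKdef
  refine ⟨∫ x in Ioc (0:ℝ) π, K * x ^ (δ/2 - 1), ?_⟩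
  intro η hηm hηb α hα
  have hgi : IntegrableOn (fun x : ℝ => K * x ^ (δ/2 - 1)) (Ioc 0 π) := by
    have h1 : IntervalIntegrable (fun x : ℝ => x ^ (δ/2 - 1)) volume 0 π :=
      intervalIntegral.intervalIntegrable_rpow' (by linarith)
    exact (intervalIntegrable_iff_integrableOn_Ioc_of_le hπ.le).mp (h1.const_mul K)
  apply integral_mono_of_nonneg ?_ hgi ?_
  · refine (ae_restrict_iff' measurableSet_Ioc).mpr (ae_of_all _ fun x hx => ?_)
    exact mul_nonneg (Real.rpow_nonneg hx.1.le _) (Real.exp_nonneg _)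
  · refine (ae_restrict_iff' measurableSet_Ioc).mpr (ae_of_all _ fun x hx => ?_)
    obtain ⟨hx0, hxπ⟩ := hx
    have huIcc : Set.uIcc x π = Icc x π := uIcc_of_le hxπ
    -- integrability of η s / s on [x, π]
    have hi1 : IntervalIntegrable (fun s => η s / s) volume x π := by
      rw [intervalIntegrable_iff_integrableOn_Ioc_of_le hxπ]
      apply Measure.integrableOn_of_bounded (M := M / x) measure_Ioc_lt_top.ne
        ((hηm.div measurable_id).aestronglyMeasurable)
      refine (ae_restrict_iff' measurableSet_Ioc).mpr (ae_of_all _ fun s hs => ?_)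
      have hs0 : 0 < s := lt_trans hx0 hs.1
      simp only [Pi.div_apply, id_eq]
      rw [norm_div, Real.norm_eq_abs, Real.norm_eq_abs, abs_of_pos hs0]
      exact div_le_div₀ hM0 ((hηb s ⟨hs0, hs.2⟩).trans (hMb s ⟨hs0, hs.2⟩)) hx0 hs.1.le
    have hi1abs : IntervalIntegrable (fun s => |η s / s|) volume x π := by
      rw [intervalIntegrable_iff_integrableOn_Ioc_of_le hxπ] at hi1 ⊢
      exact hi1.abs
    have hi3 : IntervalIntegrable (fun s : ℝ => δ/2/s) volume x π := by
      apply ContinuousOn.intervalIntegrable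
      rw [huIcc]
      exact continuousOn_const.div continuousOn_id
        (fun s hs => ne_of_gt (lt_of_lt_of_le hx0 hs.1))
    have hi2 : IntervalIntegrable (fun s : ℝ => δ/2/s + M/x₀) volume x π :=
      hi3.add intervalIntegrable_const
    have hIb : |∫ s in x..π, η s / s| ≤ δ/2 * (Real.log π - Real.log x) + M/x₀ * π := by
      calc |∫ s in x..π, η s / s| ≤ ∫ s in x..π, |η s / s| :=
            intervalIntegral.abs_integral_le_integral_abs hxπ
        _ ≤ ∫ s in x..π, (δ/2/s + M/x₀) := by
            apply intervalIntegral.integral_mono_on hxπ hi1abs hi2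
            intro s hs
            have hs0 : 0 < s := lt_of_lt_of_le hx0 hs.1
            rw [abs_div, abs_of_pos hs0]
            have h1 : |η s| ≤ δ/2 + (M/x₀) * s :=
              (hηb s ⟨hs0, hs.2⟩).trans (hkey s ⟨hs0, hs.2⟩)
            calc |η s| / s ≤ (δ/2 + (M/x₀) * s) / s := (div_le_div_iff_of_pos_right hs0).mpr h1
              _ = δ/2/s + M/x₀ := by
                  rw [add_div, mul_div_assoc, div_self hs0.ne', mul_one]
        _ = δ/2 * (Real.log π - Real.log x) + (π - x) * (M/x₀) := by
            rw [intervalIntegral.integral_add hi3 intervalIntegrable_const,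
              intervalIntegral.integral_const, smul_eq_mul]
            congr 1
            rw [show (fun s : ℝ => δ/2/s) = fun s : ℝ => (δ/2) * (1/s) from
              funext fun s => (mul_one_div _ _).symm]
            rw [intervalIntegral.integral_const_mul, integral_one_div
              (by rw [huIcc]; exact fun h => absurd h.1 (not_le.mpr hx0)),
              Real.log_div hπ.ne' hx0.ne']
        _ ≤ δ/2 * (Real.log π - Real.log x) + M/x₀ * π := by
            have h1 : (π - x) * (M/x₀) ≤ π * (M/x₀) :=
              mul_le_mul_of_nonneg_right (by linarith) (div_nonneg hM0 hx₀0.le)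
            linarith [h1, mul_comm π (M/x₀)]
    have hnegI : -(∫ s in x..π, η s / s) ≤ δ/2 * (Real.log π - Real.log x) + M/x₀ * π := by
      have := (abs_le.mp hIb).1
      linarith
    have hexp : Real.exp (-∫ s in x..π, η s / s) ≤ E * π ^ (δ/2) * x ^ (-(δ/2)) := by
      rw [hEdef, Real.rpow_def_of_pos hπ, Real.rpow_def_of_pos hx0, ← Real.exp_add,
        ← Real.exp_add]
      apply Real.exp_le_exp.mpr
      nlinarith [hnegI]
    obtain ⟨hα1, hα2⟩ := hα
    have hpow2 : x ^ (-α + -(δ/2)) ≤ π ^ (2:ℝ) * x ^ (δ/2 - 1) := by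
      have h1 : 0 ≤ x ^ (δ/2 - 1) := Real.rpow_nonneg hx0.le _
      have hP1 : (1:ℝ) ≤ π ^ (2:ℝ) := by
        have := Real.rpow_le_rpow_of_exponent_le hπ1 (by norm_num : (0:ℝ) ≤ 2)
        rwa [Real.rpow_zero] at this
      rcases le_or_gt x 1 with hx1 | hx1
      · calc x ^ (-α + -(δ/2)) ≤ x ^ (δ/2 - 1) :=
            Real.rpow_le_rpow_of_exponent_ge hx0 hx1 (by linarith)
          _ ≤ π ^ (2:ℝ) * x ^ (δ/2 - 1) := le_mul_of_one_le_left h1 hP1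
      · have hA : x ^ (-α + -(δ/2)) ≤ x := by
          calc x ^ (-α + -(δ/2)) ≤ x ^ (1:ℝ) :=
              Real.rpow_le_rpow_of_exponent_le hx1.le (by linarith)
            _ = x := Real.rpow_one x
        have hB : π ^ (δ/2 - 1) ≤ x ^ (δ/2 - 1) :=
          Real.rpow_le_rpow_of_nonpos hx0 hxπ (by linarith)
        calc x ^ (-α + -(δ/2)) ≤ x := hA
          _ ≤ π := hxπ
          _ = π ^ (1:ℝ) := (Real.rpow_one π).symm
          _ ≤ π ^ ((2:ℝ) + (δ/2 - 1)) :=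
              Real.rpow_le_rpow_of_exponent_le hπ1 (by linarith)
          _ = π ^ (2:ℝ) * π ^ (δ/2 - 1) := Real.rpow_add hπ _ _
          _ ≤ π ^ (2:ℝ) * x ^ (δ/2 - 1) :=
              mul_le_mul_of_nonneg_left hB (Real.rpow_nonneg hπ.le _)
    have hEπ : 0 ≤ E * π ^ (δ/2) := mul_nonneg hE0 (Real.rpow_nonneg hπ.le _)
    calc x ^ (-α) * Real.exp (-∫ s in x..π, η s / s)
        ≤ x ^ (-α) * (E * π ^ (δ/2) * x ^ (-(δ/2))) :=
          mul_le_mul_of_nonneg_left hexp (Real.rpow_nonneg hx0.le _)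
      _ = E * π ^ (δ/2) * (x ^ (-α) * x ^ (-(δ/2))) := by ring
      _ = E * π ^ (δ/2) * x ^ (-α + -(δ/2)) := by rw [← Real.rpow_add hx0]
      _ ≤ E * π ^ (δ/2) * (π ^ (2:ℝ) * x ^ (δ/2 - 1)) :=
          mul_le_mul_of_nonneg_left hpow2 hEπ
      _ = K * x ^ (δ/2 - 1) := by rw [hKdef]; ring
end

section
/- Let ν_{m,k} = log(k) - (1/m) Σ_{j=1}^m log(j) for 1 ≤ k ≤ m, and s_m² = Σ_{k=1}^m ν_{m,k}². Then Σ_{k=1}^m ν_{m,k} = 0 and s_m² = m(1 + o(1)) as m → ∞. -/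
set_option maxHeartbeats 1000000

open Real Filter

/-- Integral of `log` from `1` to `c`. -/
private lemma int_log_aux {c : ℝ} (hc : 1 ≤ c) :
    (∫ x in (1:ℝ)..c, Real.log x) = c * Real.log c - c + 1 := by
  rw [integral_log]
  simp [Real.log_one]

/-- Integral of `log ^ 2` from `1` to `c`. -/
private lemma int_logsq_aux {c : ℝ} (hc : 1 ≤ c) :
    (∫ x in (1:ℝ)..c, Real.log x ^ 2)
      = c * Real.log c ^ 2 - 2 * c * Real.log c + 2 * c - 2 := by
  have hder : ∀ x ∈ Set.uIcc (1:ℝ) c,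
      HasDerivAt (fun y => y * Real.log y ^ 2 - 2 * y * Real.log y + 2 * y)
        (Real.log x ^ 2) x := by
    intro x hx
    rw [Set.uIcc_of_le hc] at hx
    have hx0 : (0:ℝ) < x := lt_of_lt_of_le one_pos hx.1
    have hlog : HasDerivAt Real.log x⁻¹ x := Real.hasDerivAt_log hx0.ne'
    have h1 : HasDerivAt (fun y => y * Real.log y ^ 2)
        (1 * Real.log x ^ 2 + x * (2 * Real.log x ^ 1 * x⁻¹)) x :=
      (hasDerivAt_id x).mul (hlog.pow 2)
    have h2 : HasDerivAt (fun y => 2 * (y * Real.log y))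
        (2 * (1 * Real.log x + x * x⁻¹)) x :=
      (((hasDerivAt_id x).mul hlog)).const_mul 2
    have h3 : HasDerivAt (fun y => 2 * y) 2 x := by
      simpa using (hasDerivAt_id x).const_mul (2:ℝ)
    have := (h1.sub h2).add h3
    have hxx : x * x⁻¹ = 1 := mul_inv_cancel₀ hx0.ne'
    have hf : (fun y => y * Real.log y ^ 2 - 2 * y * Real.log y + 2 * y)
        = (((fun y => y * Real.log y ^ 2) - fun y => 2 * (y * Real.log y)) + fun y => 2 * y) := by
      funext y; simp only [Pi.add_apply, Pi.sub_apply]; ring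
    rw [hf]; refine this.congr_deriv ?_
    · rw [hxx]; field_simp; try ring
  have hcont : IntervalIntegrable (fun x => Real.log x ^ 2)
      MeasureTheory.volume 1 c := by
    apply ContinuousOn.intervalIntegrable
    apply (Real.continuousOn_log.pow 2).mono
    rw [Set.uIcc_of_le hc]
    intro x hx
    exact ne_of_gt (lt_of_lt_of_le one_pos hx.1)
  have := intervalIntegral.integral_eq_sub_of_hasDerivAt hder hcont
  rw [this]
  simp [Real.log_one]

/-- Sandwich a sum of a monotone function vanishing at 1 between integrals. -/
private lemma sum_sandwich (f : ℝ → ℝ) (hf : MonotoneOn f (Set.Ici (1:ℝ)))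
    (hf1 : f 1 = 0) (m : ℕ) (hm : 1 ≤ m) :
    (∫ x in (1:ℝ)..(m:ℝ), f x) ≤ (∑ k ∈ Finset.Icc 1 m, f k) ∧
      (∑ k ∈ Finset.Icc 1 m, f k) ≤ ∫ x in (1:ℝ)..((m:ℝ)+1), f x := by
  have hIoc : Finset.Ioc 1 m = Finset.Ico 2 (m+1) := by
    rw [← Finset.Icc_add_one_left_eq_Ioc, Finset.Ico_add_one_right_eq_Icc]; rfl
  have hsum : (∑ k ∈ Finset.Icc 1 m, f k) = ∑ k ∈ Finset.Ico 2 (m+1), f k := by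
    have h1 : (1:ℕ) ∈ Finset.Icc 1 m := Finset.mem_Icc.mpr ⟨le_rfl, hm⟩
    rw [← Finset.add_sum_erase _ _ h1, Finset.Icc_erase_left, hIoc,
      Nat.cast_one, hf1, zero_add]
  have hshift : (∑ i ∈ Finset.Ico 1 m, f ((i:ℕ)+1 : ℕ))
      = ∑ k ∈ Finset.Ico 2 (m+1), f k := by
    have hmap : Finset.Ico 2 (m+1) = (Finset.Ico 1 m).map (addRightEmbedding 1) := by
      rw [Finset.map_add_right_Ico]
    rw [hmap, Finset.sum_map]
    simp [addRightEmbedding_apply]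
  constructor
  · have h := MonotoneOn.integral_le_sum_Ico (f := f) (a := 1) (b := m) hm
      (hf.mono (fun x hx => by
        simp only [Set.mem_Icc, Nat.cast_one] at hx ⊢
        exact hx.1))
    rw [hshift] at h
    rw [hsum]
    simpa using h
  · have h := MonotoneOn.sum_le_integral_Ico (f := f) (a := 1) (b := m+1)
      (by omega)
      (hf.mono (fun x hx => by
        simp only [Set.mem_Icc, Nat.cast_one] at hx ⊢
        exact hx.1))
    rw [← Finset.Ico_add_one_right_eq_Icc]
    simpa using h

private lemma tendsto_logpow_div (n : ℕ) :
    Tendsto (fun m : ℕ => Real.log ((m:ℝ)+1) ^ n / (m:ℝ)) atTop (nhds 0) := by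
  have h := Real.tendsto_pow_log_div_mul_add_atTop 1 (-1) n one_ne_zero
  have hcomp : Tendsto (fun m : ℕ => (m:ℝ)+1) atTop atTop :=
    tendsto_atTop_add_const_right _ 1 tendsto_natCast_atTop_atTop
  have := h.comp hcomp
  refine this.congr (fun m => ?_)
  simp only [Function.comp_apply]
  ring_nf

theorem gph_regressors_centered_and_sum_of_squares
    (ν : ℕ → ℕ → ℝ)
    (hν : ∀ m k, ν m k
      = Real.log k - (1 / (m : ℝ)) * ∑ j ∈ Finset.Icc 1 m, Real.log j) :
    (∀ m : ℕ, 1 ≤ m → ∑ k ∈ Finset.Icc 1 m, ν m k = 0) ∧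
    Tendsto (fun m : ℕ => (∑ k ∈ Finset.Icc 1 m, ν m k ^ 2) / (m : ℝ))
      atTop (nhds 1) := by
  have hcard : ∀ m : ℕ, (Finset.Icc 1 m).card = m := by
    intro m; rw [Nat.card_Icc]; omega
  constructor
  · intro m hm
    have hm0 : (m:ℝ) ≠ 0 := Nat.cast_ne_zero.mpr (by omega)
    simp only [hν]
    rw [Finset.sum_sub_distrib, Finset.sum_const, hcard, nsmul_eq_mul]
    field_simp; ring
  -- Part 2
  set B : ℕ → ℝ := fun m => ∑ j ∈ Finset.Icc 1 m, Real.log j with hB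
  set A : ℕ → ℝ := fun m => ∑ k ∈ Finset.Icc 1 m, Real.log k ^ 2 with hA
  have hmono_log : MonotoneOn Real.log (Set.Ici (1:ℝ)) := fun x hx y _ hxy =>
    Real.log_le_log (lt_of_lt_of_le one_pos hx) hxy
  have hmono_sq : MonotoneOn (fun x => Real.log x ^ 2) (Set.Ici (1:ℝ)) := by
    intro x hx y hy hxy
    have h1 : 0 ≤ Real.log x := Real.log_nonneg hx
    have h2 : Real.log x ≤ Real.log y := Real.log_le_log (lt_of_lt_of_le one_pos hx) hxy
    exact pow_le_pow_left₀ h1 h2 2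
  -- the key eventual bound
  have hbound : ∀ m : ℕ, 1 ≤ m →
      |A m / m - (B m / m)^2 - 1|
        ≤ (4 * Real.log ((m:ℝ)+1)^2 + 16 * Real.log ((m:ℝ)+1) + 21) / m := by
    intro m hm
    set r : ℝ := (m:ℝ) with hr
    have hr1 : (1:ℝ) ≤ r := by rw [hr]; exact_mod_cast hm
    have hr0 : (0:ℝ) < r := lt_of_lt_of_le one_pos hr1
    set L : ℝ := Real.log r with hL
    set L' : ℝ := Real.log (r+1) with hL'
    have hLnn : 0 ≤ L := Real.log_nonneg hr1
    have hLL' : L ≤ L' := Real.log_le_log hr0 (by linarith)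
    have hL'nn : 0 ≤ L' := le_trans hLnn hLL'
    -- L' ≤ L + 1/r, i.e. r*L' ≤ r*L + 1
    have hd2 : r * L' ≤ r * L + 1 := by
      have h := Real.log_le_sub_one_of_pos (show (0:ℝ) < (r+1)/r by positivity)
      rw [Real.log_div (by linarith) hr0.ne'] at h
      have h3 : r * (L' - L) ≤ r * ((r+1)/r - 1) :=
        mul_le_mul_of_nonneg_left h hr0.le
      have h4 : r * ((r+1)/r - 1) = 1 := by field_simp; ring
      rw [h4] at h3
      linarith
    -- r*L - r + 1 ≥ 0 (i.e. log r ≥ 1 - 1/r)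
    have hBl0 : 0 ≤ r * L - r + 1 := by
      have h := Real.log_le_sub_one_of_pos (show (0:ℝ) < r⁻¹ by positivity)
      rw [Real.log_inv] at h
      have h3 : r * (-L) ≤ r * (r⁻¹ - 1) := mul_le_mul_of_nonneg_left h hr0.le
      have h4 : r * (r⁻¹ - 1) = 1 - r := by
        rw [mul_sub, mul_inv_cancel₀ hr0.ne', mul_one]
      rw [h4] at h3
      linarith
    -- (r+1)*L' - r ≥ 0
    have hBu0 : 0 ≤ (r+1) * L' - r := by
      have hr10 : (0:ℝ) < r + 1 := by linarith
      have h := Real.log_le_sub_one_of_pos (show (0:ℝ) < (r+1)⁻¹ by positivity)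
      rw [Real.log_inv] at h
      have h3 : (r+1) * (-L') ≤ (r+1) * ((r+1)⁻¹ - 1) :=
        mul_le_mul_of_nonneg_left h hr10.le
      have h4 : (r+1) * ((r+1)⁻¹ - 1) = 1 - (r+1) := by
        rw [mul_sub, mul_inv_cancel₀ hr10.ne', mul_one]
      rw [h4] at h3
      linarith
    -- integral bounds for B
    obtain ⟨hBlow, hBhigh⟩ := sum_sandwich Real.log hmono_log Real.log_one m hm
    rw [int_log_aux hr1] at hBlow
    rw [int_log_aux (by linarith : (1:ℝ) ≤ r + 1)] at hBhigh
    obtain ⟨hAlow, hAhigh⟩ := sum_sandwich (fun x => Real.log x ^ 2) hmono_sq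
      (by simp [Real.log_one]) m hm
    rw [int_logsq_aux hr1] at hAlow
    rw [int_logsq_aux (by linarith : (1:ℝ) ≤ r + 1)] at hAhigh
    -- name the bounds
    have hBl : r * L - r + 1 ≤ B m := hBlow
    have hBu : B m ≤ (r+1) * L' - r := by
      have : (r+1) * Real.log (r+1) - (r+1) + 1 = (r+1) * L' - r := by ring
      linarith [hBhigh, this.ge]
    have hAl : r * L^2 - 2*r*L + 2*r - 2 ≤ A m := hAlow
    have hAu : A m ≤ (r+1) * L'^2 - 2*(r+1)*L' + 2*(r+1) - 2 := hAhigh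
    have hB0 : 0 ≤ B m := le_trans hBl0 hBl
    -- key quadratic fact : r*L'^2 ≤ r*L^2 + 2*L'
    have hkey : r * L'^2 ≤ r * L^2 + 2 * L' := by
      nlinarith [mul_nonneg (add_nonneg hL'nn hLnn)
        (by linarith : (0:ℝ) ≤ r*L - r*L' + 1)]
    -- product facts
    have P1 : r * A m ≤ r * ((r+1) * L'^2 - 2*(r+1)*L' + 2*(r+1) - 2) :=
      mul_le_mul_of_nonneg_left hAu hr0.le
    have P2 : (r*L - r + 1)^2 ≤ (B m)^2 := pow_le_pow_left₀ hBl0 hBl 2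
    have P3 : r * (r * L'^2) ≤ r * (r * L^2 + 2*L') :=
      mul_le_mul_of_nonneg_left hkey hr0.le
    have P4 : r * (r * L) ≤ r * (r * L') :=
      mul_le_mul_of_nonneg_left (mul_le_mul_of_nonneg_left hLL' hr0.le) hr0.le
    have P6 : r * (r * L^2 - 2*r*L + 2*r - 2) ≤ r * A m :=
      mul_le_mul_of_nonneg_left hAl hr0.le
    have P7 : (B m)^2 ≤ ((r+1)*L' - r)^2 := pow_le_pow_left₀ hB0 hBu 2
    have P8 : 1 * L'^2 ≤ r * L'^2 := mul_le_mul_of_nonneg_right hr1 (sq_nonneg L')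
    have P9 : 0 ≤ r * L := mul_nonneg hr0.le hLnn
    have P10 : 0 ≤ r * L' := mul_nonneg hr0.le hL'nn
    have P11 : 0 ≤ r * L'^2 := mul_nonneg hr0.le (sq_nonneg L')
    -- rewrite the goal over a common denominator r^2
    have hr2 : (0:ℝ) < r^2 := by positivity
    have e1 : A m / r - (B m / r)^2 - 1 = (A m * r - (B m)^2 - r^2) / r^2 := by
      field_simp
    have e2 : (4*L'^2 + 16*L' + 21) / r = ((4*L'^2 + 16*L' + 21) * r) / r^2 := by
      rw [eq_div_iff hr2.ne']
      field_simp
    rw [e1, e2, abs_div, abs_of_pos hr2]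
    apply div_le_div_of_nonneg_right _ hr2.le
    rw [abs_le]
    constructor
    · linarith [P3, P4, P6, P7, P8, P9, P10, P11, hr1, hd2]
    · linarith [P1, P2, P3, P4, P9, P10, P11, hr1, hd2]
  -- the squeeze function tends to 0
  have hg : Tendsto (fun m : ℕ =>
      (4 * Real.log ((m:ℝ)+1)^2 + 16 * Real.log ((m:ℝ)+1) + 21) / m)
      atTop (nhds 0) := by
    have h2 := (tendsto_logpow_div 2).const_mul 4
    have h1 := (tendsto_logpow_div 1).const_mul 16
    have h0 := (tendsto_one_div_atTop_nhds_zero_nat (𝕜 := ℝ)).const_mul 21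
    have := (h2.add h1).add h0
    simp only [mul_zero, add_zero] at this
    refine this.congr (fun m => ?_)
    rw [pow_one]
    ring
  -- the centered expression tends to 1
  have hmain : Tendsto (fun m : ℕ => A m / m - (B m / m)^2) atTop (nhds 1) := by
    have hz : Tendsto (fun m : ℕ => A m / m - (B m / m)^2 - 1) atTop (nhds 0) := by
      apply squeeze_zero_norm' _ hg
      filter_upwards [eventually_ge_atTop 1] with m hm
      exact hbound m hm
    have := hz.add (tendsto_const_nhds (x := (1:ℝ)))
    simp only [zero_add] at this
    refine this.congr (fun m => ?_)
    ring
  -- identify the original function with the centered expression (eventually)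
  refine hmain.congr' ?_
  filter_upwards [eventually_ge_atTop 1] with m hm
  have hm0 : (m:ℝ) ≠ 0 := Nat.cast_ne_zero.mpr (by omega)
  have hexp : ∀ k ∈ Finset.Icc 1 m, ν m k ^ 2
      = Real.log k ^ 2 - 2 * ((1/(m:ℝ)) * B m) * Real.log k + ((1/(m:ℝ)) * B m)^2 := by
    intro k _
    rw [hν]
    ring
  rw [Finset.sum_congr rfl hexp]
  rw [Finset.sum_add_distrib, Finset.sum_sub_distrib, Finset.sum_const, hcard,
    nsmul_eq_mul, ← Finset.mul_sum]
  field_simp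
  ring
end

section
/- Let η* be non-decreasing on (0,π] with η*(x) → 0 as x → 0, let η be measurable with |η| ≤ η*, and define h(x) = -∫_x^π η(s)/s ds. Let x_k = 2πk/n and 1 ≤ m ≤ n/4. Then |Σ_{k=1}^m h(x_k) - (n/2π) ∫_0^{x_m} h(s) ds| ≤ η*(x_m) (Σ_{k=1}^m log(k) - m log(m) + m), which is O(η*(x_m) log(m)). -/
open Real MeasureTheory Set

lemma aux_log_intervalIntegrable {b : ℝ} (hb : 0 ≤ b) :
    IntervalIntegrable Real.log volume 0 b := by
  have h1 : IntegrableOn (fun x : ℝ => -Real.log x) (Ioc (0:ℝ) 1) := by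
    have hcont : ContinuousOn (fun x : ℝ => x - x * Real.log x) (Icc 0 1) :=
      (continuous_id.sub Real.continuous_mul_log).continuousOn
    have hderiv : ∀ x ∈ Ioo (0:ℝ) 1,
        HasDerivAt (fun x : ℝ => x - x * Real.log x) (-Real.log x) x := by
      intro x hx
      have : HasDerivAt (fun x : ℝ => x - x * Real.log x) (1 - (Real.log x + 1)) x :=
        (hasDerivAt_id x).sub (Real.hasDerivAt_mul_log (ne_of_gt hx.1))
      convert this using 1
      ring
    have hpos : ∀ x ∈ Ioo (0:ℝ) 1, 0 ≤ -Real.log x := by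
      intro x hx
      simp only [neg_nonneg]
      exact Real.log_nonpos hx.1.le hx.2.le
    exact intervalIntegral.integrableOn_deriv_of_nonneg hcont hderiv hpos
  have h1' : IntervalIntegrable Real.log volume 0 1 := by
    rw [intervalIntegrable_iff_integrableOn_Ioc_of_le (by norm_num)]
    exact h1.neg.congr (ae_of_all _ fun x => by simp)
  rcases le_or_gt b 1 with hble | hbgt
  · refine h1'.mono_set ?_
    rw [uIcc_of_le hb, uIcc_of_le (by norm_num : (0:ℝ) ≤ 1)]
    exact Icc_subset_Icc le_rfl hble
  · refine h1'.trans ?_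
    refine intervalIntegral.intervalIntegrable_log ?_
    rw [uIcc_of_le hbgt.le]
    rintro ⟨h1le, -⟩
    norm_num at h1le

lemma aux_integral_log {b : ℝ} (hb : 0 ≤ b) :
    ∫ x in (0:ℝ)..b, Real.log x = b * Real.log b - b := by
  have hcont : ContinuousOn (fun x : ℝ => x * Real.log x - x) (Icc 0 b) :=
    (Real.continuous_mul_log.sub continuous_id).continuousOn
  have hderiv : ∀ x ∈ Ioo (0:ℝ) b,
      HasDerivAt (fun x : ℝ => x * Real.log x - x) (Real.log x) x := by
    intro x hx
    have : HasDerivAt (fun x : ℝ => x * Real.log x - x) ((Real.log x + 1) - 1) x :=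
      (Real.hasDerivAt_mul_log (ne_of_gt hx.1)).sub (hasDerivAt_id x)
    convert this using 1
    ring
  have := intervalIntegral.integral_eq_sub_of_hasDerivAt_of_le hb hcont hderiv
    (aux_log_intervalIntegrable hb)
  simpa using this

theorem riemann_sum_of_h_approximation
    (ηs η : ℝ → ℝ)
    (hmono : MonotoneOn ηs (Ioc 0 π))
    (hlim : Filter.Tendsto ηs (nhdsWithin 0 (Ioi 0)) (nhds 0))
    (hmeas : Measurable η)
    (hbound : ∀ s ∈ Ioc (0:ℝ) π, |η s| ≤ ηs s)
    (h : ℝ → ℝ) (hh : ∀ x ∈ Ioc (0:ℝ) π, h x = -∫ s in x..π, η s / s)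
    (n m : ℕ) (hm : 1 ≤ m) (hmn : 4 * m ≤ n) :
    |(∑ k ∈ Finset.Icc 1 m, h (2 * π * k / n))
        - (n / (2 * π)) * ∫ s in (0:ℝ)..(2 * π * m / n), h s|
      ≤ ηs (2 * π * m / n) *
          ((∑ k ∈ Finset.Icc 1 m, Real.log k) - m * Real.log m + m) := by
  have hπ : 0 < π := Real.pi_pos
  have hn4 : (4:ℝ) * m ≤ n := by exact_mod_cast hmn
  have hm1 : (1:ℝ) ≤ m := by exact_mod_cast hm
  have hn : (0:ℝ) < n := by nlinarith
  set x : ℕ → ℝ := fun k => 2 * π * k / n with hxdef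
  set c : ℝ := n / (2 * π) with hcdef
  have hc : 0 < c := by positivity
  have hxk : ∀ k : ℕ, x k = 2 * π * k / n := fun k => rfl
  have hx0 : x 0 = 0 := by simp [hxdef]
  have hxnn : ∀ k : ℕ, 0 ≤ x k := by
    intro k; rw [hxk]; positivity
  have hxpos : ∀ k : ℕ, 1 ≤ k → 0 < x k := by
    intro k hk
    rw [hxk]
    have : (1:ℝ) ≤ k := by exact_mod_cast hk
    positivity
  have hxmono : ∀ {j k : ℕ}, j ≤ k → x j ≤ x k := by
    intro j k hjk
    rw [hxk, hxk]
    have : (j:ℝ) ≤ k := by exact_mod_cast hjk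
    gcongr
  have hxmhalf : x m ≤ π / 2 := by
    rw [hxk, div_le_iff₀ hn]
    nlinarith
  have hxmπ : x m ≤ π := hxmhalf.trans (by linarith)
  have hxmIoc : x m ∈ Ioc 0 π := ⟨hxpos m hm, hxmπ⟩
  have hxIoc : ∀ k : ℕ, 1 ≤ k → k ≤ m → x k ∈ Ioc 0 π :=
    fun k h1 h2 => ⟨hxpos k h1, (hxmono h2).trans hxmπ⟩
  set f : ℝ → ℝ := fun t => η t / t with hfdef
  have hηsnn : ∀ t ∈ Ioc (0:ℝ) π, 0 ≤ ηs t :=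
    fun t ht => le_trans (abs_nonneg _) (hbound t ht)
  -- integrability of f on compact subintervals of (0, π]
  have hfint : ∀ a b : ℝ, 0 < a → a ≤ b → b ≤ π → IntervalIntegrable f volume a b := by
    intro a b ha hab hbπ
    rw [intervalIntegrable_iff_integrableOn_Ioc_of_le hab]
    refine Integrable.mono' (g := fun _ => ηs π / a)
      (integrableOn_const measure_Ioc_lt_top.ne)
      ((hmeas.div measurable_id).aestronglyMeasurable.restrict) ?_
    filter_upwards [ae_restrict_mem measurableSet_Ioc] with t ht
    have ht0 : 0 < t := ha.trans ht.1
    have htπ : t ≤ π := ht.2.trans hbπ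
    have h1 : |η t| ≤ ηs t := hbound t ⟨ht0, htπ⟩
    have h2 : ηs t ≤ ηs π := hmono ⟨ht0, htπ⟩ ⟨hπ, le_rfl⟩ htπ
    have : ‖f t‖ = |η t| / t := by
      rw [hfdef]
      simp only [Real.norm_eq_abs, abs_div, abs_of_pos ht0]
    rw [this]
    calc |η t| / t ≤ ηs π / t := by gcongr; exact h1.trans h2
      _ ≤ ηs π / a := by
          have := hηsnn π ⟨hπ, le_rfl⟩
          gcongr
          exact ht.1.le
  set g : ℝ → ℝ := fun s => -∫ t in s..π, f t with hgdef
  -- key estimate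
  have hkey : ∀ s b : ℝ, 0 < s → s ≤ b → b ≤ π →
      |∫ t in s..b, f t| ≤ ηs b * (Real.log b - Real.log s) := by
    intro s b hs hsb hbπ
    have hb0 : 0 < b := hs.trans_le hsb
    have hbIoc : b ∈ Ioc (0:ℝ) π := ⟨hb0, hbπ⟩
    have hηb : 0 ≤ ηs b := hηsnn b hbIoc
    have hcont : ContinuousOn (fun t : ℝ => ηs b * (1 / t)) (uIcc s b) := by
      refine continuousOn_const.mul (continuousOn_const.div continuousOn_id ?_)
      intro t ht
      rw [uIcc_of_le hsb] at ht
      exact ne_of_gt (hs.trans_le ht.1)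
    have hbint : IntervalIntegrable (fun t : ℝ => ηs b * (1 / t)) volume s b :=
      hcont.intervalIntegrable
    have hae : ∀ᵐ t ∂(volume.restrict (uIoc s b)), ‖f t‖ ≤ ηs b * (1 / t) := by
      filter_upwards [ae_restrict_mem measurableSet_uIoc] with t ht
      rw [uIoc_of_le hsb] at ht
      have ht0 : 0 < t := hs.trans ht.1
      have htπ : t ≤ π := ht.2.trans hbπ
      have hnf : ‖f t‖ = |η t| / t := by
        rw [hfdef]
        simp only [Real.norm_eq_abs, abs_div, abs_of_pos ht0]
      rw [hnf, mul_one_div]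
      have h1 : |η t| ≤ ηs t := hbound t ⟨ht0, htπ⟩
      have h2 : ηs t ≤ ηs b := hmono ⟨ht0, htπ⟩ hbIoc ht.2
      gcongr
      exact h1.trans h2
    have hb2 := intervalIntegral.norm_integral_le_abs_of_norm_le hae hbint
    have hval : ∫ t in s..b, ηs b * (1 / t) = ηs b * (Real.log b - Real.log s) := by
      rw [intervalIntegral.integral_const_mul, integral_one_div, Real.log_div hb0.ne' hs.ne']
      rw [uIcc_of_le hsb]
      rintro ⟨h0, -⟩
      exact absurd h0 (not_le.2 hs)
    calc |∫ t in s..b, f t| ≤ |∫ t in s..b, ηs b * (1 / t)| := hb2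
      _ = ηs b * (Real.log b - Real.log s) := by
          rw [hval, abs_of_nonneg]
          exact mul_nonneg hηb (sub_nonneg.2 (Real.log_le_log hs hsb))
  have hgdiff : ∀ s b : ℝ, 0 < s → s ≤ b → b ≤ π →
      g b - g s = ∫ t in s..b, f t := by
    intro s b hs hsb hbπ
    have h1 : IntervalIntegrable f volume s b := hfint s b hs hsb hbπ
    have h2 : IntervalIntegrable f volume b π := hfint b π (hs.trans_le hsb) hbπ le_rfl
    have hadd := intervalIntegral.integral_add_adjacent_intervals h1 h2
    rw [hgdef]
    simp only
    linarith [hadd]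
  have hgbound : ∀ s b : ℝ, 0 < s → s ≤ b → b ≤ x m →
      |g b - g s| ≤ ηs (x m) * (Real.log b - Real.log s) := by
    intro s b hs hsb hbm
    have hbπ : b ≤ π := hbm.trans hxmπ
    rw [hgdiff s b hs hsb hbπ]
    refine (hkey s b hs hsb hbπ).trans ?_
    have hL : 0 ≤ Real.log b - Real.log s := sub_nonneg.2 (Real.log_le_log hs hsb)
    have hη : ηs b ≤ ηs (x m) := hmono ⟨hs.trans_le hsb, hbπ⟩ hxmIoc hbm
    exact mul_le_mul_of_nonneg_right hη hL
  have hgcont : ContinuousOn g (Ioc 0 π) := by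
    intro s hs
    have hs2 : 0 < s / 2 := by linarith [hs.1]
    have hs2π : s / 2 ≤ π := by linarith [hs.2, hs.1]
    have hint : IntegrableOn f (uIcc (s / 2) π) := by
      rw [uIcc_of_le hs2π, integrableOn_Icc_iff_integrableOn_Ioc]
      have := hfint (s / 2) π hs2 hs2π le_rfl
      rwa [intervalIntegrable_iff_integrableOn_Ioc_of_le hs2π] at this
    have hcontIcc : ContinuousOn (fun u => ∫ t in u..π, f t) (uIcc (s / 2) π) :=
      intervalIntegral.continuousOn_primitive_interval_left hint
    have hc2 : ContinuousWithinAt g (uIcc (s / 2) π) s := by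
      refine (hcontIcc.neg) s ?_
      rw [uIcc_of_le hs2π]
      exact ⟨by linarith [hs.1], hs.2⟩
    refine hc2.mono_of_mem_nhdsWithin ?_
    have hsub : Ioc 0 π ∩ Ioi (s / 2) ⊆ uIcc (s / 2) π := by
      rw [uIcc_of_le hs2π]
      rintro t ⟨ht1, ht2⟩
      exact ⟨le_of_lt ht2, ht1.2⟩
    refine Filter.mem_of_superset (Filter.inter_mem self_mem_nhdsWithin
      (mem_nhdsWithin_of_mem_nhds (Ioi_mem_nhds (by linarith [hs.1])))) hsub
  have hgint0 : IntervalIntegrable g volume 0 (x m) := by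
    have hxm0 : 0 < x m := hxpos m hm
    rw [intervalIntegrable_iff_integrableOn_Ioc_of_le hxm0.le]
    have hmeasg : AEStronglyMeasurable g (volume.restrict (Ioc 0 (x m))) :=
      (hgcont.mono (Ioc_subset_Ioc le_rfl hxmπ)).aestronglyMeasurable measurableSet_Ioc
    have hBint : IntervalIntegrable (fun s => ηs π * (Real.log π - Real.log s))
        volume 0 (x m) :=
      (intervalIntegrable_const.sub (aux_log_intervalIntegrable hxm0.le)).const_mul _
    rw [intervalIntegrable_iff_integrableOn_Ioc_of_le hxm0.le] at hBint
    refine Integrable.mono' hBint hmeasg ?_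
    filter_upwards [ae_restrict_mem measurableSet_Ioc] with s hsmem
    have hs0 : 0 < s := hsmem.1
    have hsπ : s ≤ π := hsmem.2.trans hxmπ
    have hng : ‖g s‖ = |∫ t in s..π, f t| := by
      rw [hgdef]
      simp [Real.norm_eq_abs]
    rw [hng]
    exact hkey s π hs0 hsπ le_rfl
  have hgadj : ∀ k, k < m → IntervalIntegrable g volume (x k) (x (k + 1)) := by
    intro k hk
    refine hgint0.mono_set ?_
    rw [uIcc_of_le (hxmono (Nat.le_succ k)), uIcc_of_le (hxnn m)]
    exact Icc_subset_Icc (hxnn k) (hxmono hk)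
  -- replace h with g
  have hsum_hg : ∑ k ∈ Finset.Icc 1 m, h (2 * π * k / n) = ∑ k ∈ Finset.Icc 1 m, g (x k) := by
    refine Finset.sum_congr rfl fun k hk => ?_
    rw [Finset.mem_Icc] at hk
    exact hh (x k) (hxIoc k hk.1 hk.2)
  have hint_hg : ∫ s in (0:ℝ)..(2 * π * m / n), h s = ∫ s in (0:ℝ)..(x m), g s := by
    refine intervalIntegral.integral_congr_ae ?_
    refine ae_of_all _ fun s hs => ?_
    rw [uIoc_of_le (hxnn m)] at hs
    exact hh s ⟨hs.1, hs.2.trans hxmπ⟩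
  -- split the integral
  have hsplit : ∫ s in (0:ℝ)..(x m), g s
      = ∑ k ∈ Finset.range m, ∫ s in x k..x (k + 1), g s := by
    rw [intervalIntegral.sum_integral_adjacent_intervals hgadj, hx0]
  -- sum over Icc to range
  have hshift : ∀ F : ℕ → ℝ, ∑ k ∈ Finset.Icc 1 m, F k = ∑ k ∈ Finset.range m, F (k + 1) := by
    intro F
    rw [← Finset.Ico_add_one_right_eq_Icc, Finset.sum_Ico_eq_sum_range]
    simp [add_comm]
  -- per-term estimate
  have hterm : ∀ k, k < m →
      |g (x (k + 1)) - c * ∫ s in x k..x (k + 1), g s|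
      ≤ ηs (x m) * (Real.log (x (k + 1))
          - (((k:ℝ) + 1) * Real.log (x (k + 1)) - ((k:ℝ) + 1)
            - ((k:ℝ) * Real.log (x k) - (k:ℝ)))) := by
    intro k hk
    have hj1 : 1 ≤ k + 1 := le_add_self
    have hjm : k + 1 ≤ m := hk
    have hxj0 : 0 < x (k + 1) := hxpos _ hj1
    have hxkx : x k ≤ x (k + 1) := hxmono (Nat.le_succ k)
    have hgj : IntervalIntegrable g volume (x k) (x (k + 1)) := hgadj k hk
    have hcx : ∀ j : ℕ, c * x j = j := by
      intro j
      rw [hcdef, hxk]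
      field_simp
    have hcΔ : c * (x (k + 1) - x k) = 1 := by
      rw [mul_sub, hcx, hcx]
      push_cast
      ring
    have e1 : g (x (k + 1)) - c * ∫ s in x k..x (k + 1), g s
        = c * ∫ s in x k..x (k + 1), (g (x (k + 1)) - g s) := by
      rw [intervalIntegral.integral_sub intervalIntegrable_const hgj,
        intervalIntegral.integral_const, smul_eq_mul]
      linear_combination (-(g (x (k + 1)))) * hcΔ
    have hl : IntervalIntegrable Real.log volume (x k) (x (k + 1)) := by
      refine (aux_log_intervalIntegrable (hxnn (k + 1))).mono_set ?_
      rw [uIcc_of_le hxkx, uIcc_of_le (hxnn (k + 1))]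
      exact Icc_subset_Icc (hxnn k) le_rfl
    have hBint : IntervalIntegrable
        (fun s => ηs (x m) * (Real.log (x (k + 1)) - Real.log s))
        volume (x k) (x (k + 1)) :=
      (intervalIntegrable_const.sub hl).const_mul _
    have hae : ∀ᵐ s ∂(volume.restrict (uIoc (x k) (x (k + 1)))),
        ‖g (x (k + 1)) - g s‖ ≤ ηs (x m) * (Real.log (x (k + 1)) - Real.log s) := by
      filter_upwards [ae_restrict_mem measurableSet_uIoc] with s hsmem
      rw [uIoc_of_le hxkx] at hsmem
      have hs0 : 0 < s := lt_of_le_of_lt (hxnn k) hsmem.1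
      rw [Real.norm_eq_abs, abs_sub_comm]
      have := hgbound s (x (k + 1)) hs0 hsmem.2 (hxmono hjm)
      rwa [abs_sub_comm] at this
    have hb2 := intervalIntegral.norm_integral_le_abs_of_norm_le hae hBint
    have hlog : ∫ s in x k..x (k + 1), Real.log s
        = (x (k + 1)) * Real.log (x (k + 1)) - (x (k + 1))
          - ((x k) * Real.log (x k) - (x k)) := by
      rw [← intervalIntegral.integral_interval_sub_left
        (aux_log_intervalIntegrable (hxnn (k + 1))) (aux_log_intervalIntegrable (hxnn k)),
        aux_integral_log (hxnn (k + 1)), aux_integral_log (hxnn k)]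
    have hval : ∫ s in x k..x (k + 1), ηs (x m) * (Real.log (x (k + 1)) - Real.log s)
        = ηs (x m) * ((x (k + 1) - x k) * Real.log (x (k + 1))
            - ((x (k + 1)) * Real.log (x (k + 1)) - (x (k + 1))
              - ((x k) * Real.log (x k) - (x k)))) := by
      rw [intervalIntegral.integral_const_mul]
      congr 1
      rw [intervalIntegral.integral_sub intervalIntegrable_const hl,
        intervalIntegral.integral_const, hlog, smul_eq_mul]
    have hnonneg : 0 ≤ ∫ s in x k..x (k + 1),
        ηs (x m) * (Real.log (x (k + 1)) - Real.log s) := by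
      refine intervalIntegral.integral_nonneg_of_ae_restrict hxkx ?_
      have h0 : ∀ᵐ s ∂(volume.restrict (Icc (x k) (x (k + 1)))), s ≠ (0:ℝ) := by
        rw [ae_iff]
        have hsub : {a : ℝ | ¬a ≠ 0} ⊆ {(0:ℝ)} := by
          intro a ha
          simp only [mem_setOf_eq, not_not] at ha
          simp [ha]
        refine measure_mono_null hsub ?_
        exact le_antisymm ((Measure.restrict_apply_le _ _).trans_eq
          (Real.volume_singleton)) zero_le
      filter_upwards [ae_restrict_mem measurableSet_Icc, h0] with s hsmem hs0
      have hspos : 0 < s := lt_of_le_of_ne (le_trans (hxnn k) hsmem.1) (Ne.symm hs0)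
      exact mul_nonneg (hηsnn (x m) hxmIoc)
        (sub_nonneg.2 (Real.log_le_log hspos hsmem.2))
    rw [e1, abs_mul, abs_of_pos hc]
    have hfin : |∫ s in x k..x (k + 1), (g (x (k + 1)) - g s)|
        ≤ ηs (x m) * ((x (k + 1) - x k) * Real.log (x (k + 1))
            - ((x (k + 1)) * Real.log (x (k + 1)) - (x (k + 1))
              - ((x k) * Real.log (x k) - (x k)))) := by
      calc |∫ s in x k..x (k + 1), (g (x (k + 1)) - g s)|
          ≤ |∫ s in x k..x (k + 1), ηs (x m) * (Real.log (x (k + 1)) - Real.log s)| := hb2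
        _ = ∫ s in x k..x (k + 1), ηs (x m) * (Real.log (x (k + 1)) - Real.log s) :=
            abs_of_nonneg hnonneg
        _ = _ := hval
    calc c * |∫ s in x k..x (k + 1), (g (x (k + 1)) - g s)|
        ≤ c * (ηs (x m) * ((x (k + 1) - x k) * Real.log (x (k + 1))
            - ((x (k + 1)) * Real.log (x (k + 1)) - (x (k + 1))
              - ((x k) * Real.log (x k) - (x k))))) := by
          exact mul_le_mul_of_nonneg_left hfin hc.le
      _ = ηs (x m) * (Real.log (x (k + 1))
          - (((k:ℝ) + 1) * Real.log (x (k + 1)) - ((k:ℝ) + 1)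
            - ((k:ℝ) * Real.log (x k) - (k:ℝ)))) := by
          have h1 := hcx (k + 1)
          have h2 := hcx k
          push_cast at h1
          linear_combination (ηs (x m)) * h1
            + (ηs (x m) * (Real.log (x k) - Real.log (x (k + 1)) - 1)) * h2
  -- the final computation
  have hlogx : ∀ j : ℕ, 1 ≤ j → Real.log (x j) = Real.log (2 * π / n) + Real.log j := by
    intro j hj
    have hj0 : (0:ℝ) < j := by exact_mod_cast hj
    have hxj : x j = (2 * π / n) * j := by rw [hxk]; ring
    rw [hxj, Real.log_mul (by positivity) (ne_of_gt hj0)]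
  have htel : ∑ k ∈ Finset.range m,
      ((((k:ℝ) + 1) * Real.log (x (k + 1)) - ((k:ℝ) + 1))
        - ((k:ℝ) * Real.log (x k) - (k:ℝ)))
      = (m:ℝ) * Real.log (x m) - m := by
    have ht := Finset.sum_range_sub (f := fun j : ℕ => (j:ℝ) * Real.log (x j) - (j:ℝ)) m
    simp only [Nat.cast_add, Nat.cast_one, Nat.cast_zero, zero_mul, sub_zero, hx0] at ht
    convert ht using 2
  have hsum1 : ∑ k ∈ Finset.range m, Real.log (x (k + 1))
      = m * Real.log (2 * π / n) + ∑ k ∈ Finset.range m, Real.log ((k + 1 : ℕ) : ℝ) := by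
    have : ∀ k ∈ Finset.range m, Real.log (x (k + 1))
        = Real.log (2 * π / n) + Real.log ((k + 1 : ℕ) : ℝ) :=
      fun k _ => hlogx (k + 1) le_add_self
    rw [Finset.sum_congr rfl this, Finset.sum_add_distrib, Finset.sum_const,
      Finset.card_range, nsmul_eq_mul]
  rw [hint_hg, hsum_hg, ← hxk m, hsplit, hshift (fun k => g (x k)), Finset.mul_sum,
    ← Finset.sum_sub_distrib]
  refine (Finset.abs_sum_le_sum_abs _ _).trans ?_
  refine (Finset.sum_le_sum fun k hk => hterm k (Finset.mem_range.1 hk)).trans ?_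
  apply le_of_eq
  rw [← Finset.mul_sum]
  congr 1
  rw [Finset.sum_sub_distrib, htel, hsum1, hshift (fun k => Real.log k), hlogx m hm]
  ring
end

section
/- Let η* be non-decreasing and slowly varying at 0 on (0,π] with η*(x) → 0, |η| ≤ η*, h(x) = -∫_x^π η(s)/s ds, h*(x) = ∫_x^π η*(s)/s ds, x_k = 2πk/n, and ν_{m,k} = log(k) - (1/m)Σ_{j=1}^m log(j). Then |Σ_{k=1}^m ν_{m,k} h(x_k)| ≤ m η*(x_m) + O(log²(m) η*(x_m) + log(m) h*(x_m)), uniformly over all η with |η| ≤ η*. -/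
open Real MeasureTheory Set Filter
set_option maxHeartbeats 1000000

private lemma abel_sum (ν f : ℕ → ℝ) : ∀ m : ℕ,
    ∑ k ∈ Finset.Icc 1 m, ν k * f k
      = ∑ j ∈ Finset.Ico 1 m, (∑ i ∈ Finset.Icc 1 j, ν i) * (f j - f (j + 1))
        + (∑ i ∈ Finset.Icc 1 m, ν i) * f m := by
  intro m
  induction m with
  | zero => simp
  | succ m ih =>
      rcases Nat.eq_zero_or_pos m with hm | hm
      · subst hm; simp
      · rw [Finset.sum_Icc_succ_top (Nat.le_add_left 1 m),
          Finset.sum_Icc_succ_top (Nat.le_add_left 1 m) ν,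
          Finset.sum_Ico_succ_top hm, ih]
        ring

private lemma log_succ_sub (m : ℕ) (hm : 1 ≤ m) :
    (1:ℝ)/((m:ℝ)+1) ≤ Real.log ((m:ℝ)+1) - Real.log m ∧
      Real.log ((m:ℝ)+1) - Real.log m ≤ 1/(m:ℝ) := by
  have hm0 : (0:ℝ) < m := by exact_mod_cast hm
  have hm1 : (0:ℝ) < (m:ℝ) + 1 := by linarith
  constructor
  · have h2 : Real.log ((m:ℝ)/((m:ℝ)+1)) ≤ (m:ℝ)/((m:ℝ)+1) - 1 :=
      Real.log_le_sub_one_of_pos (by positivity)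
    rw [Real.log_div (ne_of_gt hm0) (ne_of_gt hm1)] at h2
    have h3 : (m:ℝ)/((m:ℝ)+1) - 1 = -(1/((m:ℝ)+1)) := by field_simp; ring
    rw [h3] at h2
    linarith
  · have h2 : Real.log (((m:ℝ)+1)/(m:ℝ)) ≤ ((m:ℝ)+1)/(m:ℝ) - 1 :=
      Real.log_le_sub_one_of_pos (by positivity)
    rw [Real.log_div (ne_of_gt hm1) (ne_of_gt hm0)] at h2
    have h3 : ((m:ℝ)+1)/(m:ℝ) - 1 = 1/(m:ℝ) := by field_simp; ring
    rw [h3] at h2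
    linarith

private lemma log_fact_lower (m : ℕ) (hm : 1 ≤ m) :
    (m : ℝ) * Real.log m - m + 1 ≤ ∑ i ∈ Finset.Icc 1 m, Real.log i := by
  induction m, hm using Nat.le_induction with
  | base => simp
  | succ m hm ih =>
      rw [Finset.sum_Icc_succ_top (Nat.le_add_left 1 m)]
      have hm0 : (0:ℝ) < m := by exact_mod_cast hm
      have key : Real.log ((m:ℝ)+1) - Real.log m ≤ 1/(m:ℝ) := (log_succ_sub m hm).2
      have key2 : (m:ℝ) * (Real.log ((m:ℝ)+1) - Real.log m) ≤ 1 := by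
        have := mul_le_mul_of_nonneg_left key hm0.le
        rw [mul_one_div, div_self (ne_of_gt hm0)] at this
        linarith
      push_cast
      nlinarith [ih]

private lemma log_fact_upper (m : ℕ) (hm : 1 ≤ m) :
    ∑ i ∈ Finset.Icc 1 m, Real.log i ≤ (m : ℝ) * Real.log m - m + 1 + Real.log m := by
  induction m, hm using Nat.le_induction with
  | base => simp
  | succ m hm ih =>
      rw [Finset.sum_Icc_succ_top (Nat.le_add_left 1 m)]
      have hm0 : (0:ℝ) < m := by exact_mod_cast hm
      have key : (1:ℝ)/((m:ℝ)+1) ≤ Real.log ((m:ℝ)+1) - Real.log m := (log_succ_sub m hm).1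
      have key2 : (1:ℝ) ≤ ((m:ℝ)+1) * (Real.log ((m:ℝ)+1) - Real.log m) := by
        have := mul_le_mul_of_nonneg_left key (by positivity : (0:ℝ) ≤ (m:ℝ)+1)
        rw [mul_one_div, div_self (by positivity : ((m:ℝ)+1) ≠ 0)] at this
        linarith
      have hlog : Real.log m ≤ Real.log ((m:ℝ)+1) := Real.log_le_log hm0 (by linarith)
      push_cast
      nlinarith [ih]

private lemma harmonic_le (m : ℕ) (hm : 1 ≤ m) :
    ∑ j ∈ Finset.Icc 1 m, (1:ℝ)/j ≤ 1 + Real.log m := by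
  induction m, hm using Nat.le_induction with
  | base => norm_num
  | succ m hm ih =>
      rw [Finset.sum_Icc_succ_top (Nat.le_add_left 1 m)]
      have key : (1:ℝ)/((m:ℝ)+1) ≤ Real.log ((m:ℝ)+1) - Real.log m := (log_succ_sub m hm).1
      push_cast
      linarith

theorem bias_bound_sum_nu_h
    (ηs : ℝ → ℝ)
    (hmono : MonotoneOn ηs (Ioc 0 π))
    (hslow : ∀ t > (0:ℝ),
      Tendsto (fun x => ηs (t * x) / ηs x) (nhdsWithin 0 (Ioi 0)) (nhds 1))
    (hlim : Tendsto ηs (nhdsWithin 0 (Ioi 0)) (nhds 0)) :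
    ∃ C : ℝ,
      ∀ η : ℝ → ℝ, Measurable η → (∀ s ∈ Ioc (0:ℝ) π, |η s| ≤ ηs s) →
        ∀ n m : ℕ, 1 ≤ m → 2 * m ≤ n →
          |∑ k ∈ Finset.Icc 1 m,
              (Real.log k - (1 / (m : ℝ)) * ∑ j ∈ Finset.Icc 1 m, Real.log j) *
                (-∫ s in (2 * π * k / n)..π, η s / s)|
            ≤ m * ηs (2 * π * m / n)
              + C * ((Real.log m) ^ 2 * ηs (2 * π * m / n)
                  + Real.log m * ∫ s in (2 * π * m / n)..π, ηs s / s) := by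
  refine ⟨9, ?_⟩
  intro η hηmeas hηle n m hm hmn
  have hπ : (0:ℝ) < π := Real.pi_pos
  have hn2 : 2 ≤ n := by omega
  have hn0 : (0:ℝ) < n := by exact_mod_cast (by omega : 0 < n)
  have hm0 : (0:ℝ) < m := by exact_mod_cast hm
  -- basic facts about the points x k = 2πk/n
  have hxpos : ∀ k : ℕ, 1 ≤ k → 0 < 2 * π * k / n := by
    intro k hk
    have : (0:ℝ) < k := by exact_mod_cast hk
    positivity
  have hxmono : ∀ j k : ℕ, j ≤ k → 2 * π * j / n ≤ 2 * π * k / n := by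
    intro j k hjk
    have : (j:ℝ) ≤ k := by exact_mod_cast hjk
    apply (div_le_div_iff_of_pos_right hn0).mpr
    nlinarith
  have hxmπ : 2 * π * m / n ≤ π := by
    rw [div_le_iff₀ hn0]
    have : (2*m : ℝ) ≤ n := by exact_mod_cast hmn
    nlinarith
  have hxmem : ∀ k : ℕ, 1 ≤ k → k ≤ m → 2 * π * k / n ∈ Ioc (0:ℝ) π :=
    fun k hk hkm => ⟨hxpos k hk, le_trans (hxmono k m hkm) hxmπ⟩
  have hηs_nonneg : ∀ s ∈ Ioc (0:ℝ) π, 0 ≤ ηs s :=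
    fun s hs => le_trans (abs_nonneg _) (hηle s hs)
  have hc0 : 0 ≤ ηs (2 * π * m / n) := hηs_nonneg _ (hxmem m hm le_rfl)
  -- integrability of η s / s on subintervals of (0, π]
  have hint : ∀ a b : ℝ, 0 < a → a ≤ b → b ≤ π →
      IntervalIntegrable (fun s => η s / s) volume a b := by
    intro a b ha hab hb
    rw [intervalIntegrable_iff, uIoc_of_le hab]
    have hconst : IntegrableOn (fun _ : ℝ => ηs π / a) (Ioc a b) volume :=
      integrableOn_const measure_Ioc_lt_top.ne
    refine Integrable.mono' hconst ((hηmeas.div measurable_id).aestronglyMeasurable) ?_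
    filter_upwards [ae_restrict_mem measurableSet_Ioc] with s hs
    have hs0 : 0 < s := ha.trans hs.1
    have hsπ : s ≤ π := le_trans hs.2 hb
    have h1 : |η s| ≤ ηs π :=
      le_trans (hηle s ⟨hs0, hsπ⟩) (hmono ⟨hs0, hsπ⟩ ⟨hπ, le_refl π⟩ hsπ)
    have h2 : ‖η s / s‖ = |η s| / s := by
      rw [Real.norm_eq_abs, abs_div, abs_of_pos hs0]
    rw [h2]
    exact div_le_div₀ (le_trans (abs_nonneg _) h1) h1 ha hs.1.le
  set L : ℝ := ∑ j ∈ Finset.Icc 1 m, Real.log (j:ℝ) with hL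
  set lm : ℝ := Real.log (m:ℝ) with hlm
  have hlm0 : 0 ≤ lm := Real.log_natCast_nonneg m
  -- Abel summation
  have habel :
      ∑ k ∈ Finset.Icc 1 m,
          (Real.log (k:ℝ) - (1 / (m : ℝ)) * L) * (-∫ s in (2 * π * k / n)..π, η s / s)
        = ∑ j ∈ Finset.Ico 1 m,
            (∑ i ∈ Finset.Icc 1 j, (Real.log (i:ℝ) - (1 / (m : ℝ)) * L)) *
              ((-∫ s in (2 * π * j / n)..π, η s / s) -
                (-∫ s in (2 * π * (j+1 : ℕ) / n)..π, η s / s))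
          + (∑ i ∈ Finset.Icc 1 m, (Real.log (i:ℝ) - (1 / (m : ℝ)) * L)) *
              (-∫ s in (2 * π * m / n)..π, η s / s) :=
    abel_sum (fun k => Real.log (k:ℝ) - (1 / (m : ℝ)) * L)
      (fun k => -∫ s in (2 * π * k / n)..π, η s / s) m
  have hSm0 : ∑ i ∈ Finset.Icc 1 m, (Real.log (i:ℝ) - (1 / (m : ℝ)) * L) = 0 := by
    rw [Finset.sum_sub_distrib, Finset.sum_const, Nat.card_Icc, ← hL]
    simp only [Nat.add_sub_cancel, nsmul_eq_mul]
    field_simp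
    ring
  rw [habel, hSm0, zero_mul, add_zero]
  -- bound on the partial sums S j
  have hSabs : ∀ j : ℕ, 1 ≤ j → j ≤ m →
      |∑ i ∈ Finset.Icc 1 j, (Real.log (i:ℝ) - (1 / (m : ℝ)) * L)|
        ≤ (j:ℝ) * (lm - Real.log j) + (1 + lm) := by
    intro j hj hjm
    have hj0 : (0:ℝ) < j := by exact_mod_cast hj
    have hjmR : (j:ℝ) ≤ m := by exact_mod_cast hjm
    have hS : ∑ i ∈ Finset.Icc 1 j, (Real.log (i:ℝ) - (1 / (m : ℝ)) * L)
        = (∑ i ∈ Finset.Icc 1 j, Real.log (i:ℝ)) - (j:ℝ) * ((1 / (m : ℝ)) * L) := by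
      rw [Finset.sum_sub_distrib, Finset.sum_const, Nat.card_Icc]
      simp only [Nat.add_sub_cancel, nsmul_eq_mul]
    have hA1 := log_fact_lower j hj
    have hA2 := log_fact_upper j hj
    have hB1 := log_fact_lower m hm
    have hB2 := log_fact_upper m hm
    rw [← hL] at hB1 hB2
    have hlj0 : 0 ≤ Real.log (j:ℝ) := Real.log_natCast_nonneg j
    have hljm : Real.log (j:ℝ) ≤ lm := Real.log_le_log hj0 hjmR
    rw [hS]
    set A : ℝ := ∑ i ∈ Finset.Icc 1 j, Real.log (i:ℝ)
    set lj : ℝ := Real.log (j:ℝ)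
    have hmul : (m:ℝ) * ((j:ℝ) * ((1 / (m : ℝ)) * L)) = (j:ℝ) * L := by
      field_simp
    rw [abs_le]
    constructor
    · have h3 : (m:ℝ) * (-((j:ℝ) * (lm - lj) + (1 + lm))) ≤ (m:ℝ) * A - (j:ℝ) * L := by
        have p1 := mul_le_mul_of_nonneg_left hA1 hm0.le
        have p2 := mul_le_mul_of_nonneg_left hB2 hj0.le
        have p3 : 0 ≤ ((m:ℝ) - j) * lm := mul_nonneg (sub_nonneg.2 hjmR) hlm0
        nlinarith [p1, p2, p3]
      have h4 : (m:ℝ) * (A - (j:ℝ) * ((1 / (m : ℝ)) * L)) = (m:ℝ) * A - (j:ℝ) * L := by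
        rw [mul_sub, hmul]
      exact (mul_le_mul_iff_of_pos_left hm0).mp (by rw [h4]; exact h3)
    · have h3 : (m:ℝ) * A - (j:ℝ) * L ≤ (m:ℝ) * ((j:ℝ) * (lm - lj) + (1 + lm)) := by
        have p1 := mul_le_mul_of_nonneg_left hA2 hm0.le
        have p2 := mul_le_mul_of_nonneg_left hB1 hj0.le
        have p3 : 0 ≤ (m:ℝ) * ((j:ℝ) * (lm - lj)) :=
          mul_nonneg hm0.le (mul_nonneg hj0.le (sub_nonneg.2 hljm))
        have p4 : (m:ℝ) * lj ≤ (m:ℝ) * lm := mul_le_mul_of_nonneg_left hljm hm0.le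
        nlinarith [p1, p2, p3, p4]
      have h4 : (m:ℝ) * (A - (j:ℝ) * ((1 / (m : ℝ)) * L)) = (m:ℝ) * A - (j:ℝ) * L := by
        rw [mul_sub, hmul]
      exact (mul_le_mul_iff_of_pos_left hm0).mp (by rw [h4]; exact h3)
  -- bound on the increments
  have hd : ∀ j : ℕ, 1 ≤ j → j + 1 ≤ m →
      |(-∫ s in (2 * π * j / n)..π, η s / s) -
          (-∫ s in (2 * π * (j+1 : ℕ) / n)..π, η s / s)|
        ≤ ηs (2 * π * m / n) * (1/(j:ℝ)) := by
    intro j hj hjm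
    have hj0 : (0:ℝ) < j := by exact_mod_cast hj
    have hxj : 0 < 2 * π * j / n := hxpos j hj
    have hxj1 : 0 < 2 * π * (j+1:ℕ) / n := hxpos (j+1) (by omega)
    have hab : 2 * π * j / n ≤ 2 * π * (j+1:ℕ) / n := hxmono j (j+1) (by omega)
    have hbπ : 2 * π * (j+1:ℕ) / n ≤ π := (hxmem (j+1) (by omega) hjm).2
    have hI1 : IntervalIntegrable (fun s => η s / s) volume
        (2 * π * j / n) (2 * π * (j+1:ℕ) / n) :=
      hint _ _ hxj hab hbπ
    have hI2 : IntervalIntegrable (fun s => η s / s) volume (2 * π * (j+1:ℕ) / n) π :=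
      hint _ _ hxj1 hbπ le_rfl
    have hadd := intervalIntegral.integral_add_adjacent_intervals hI1 hI2
    have hdiff : (-∫ s in (2 * π * j / n)..π, η s / s) -
        (-∫ s in (2 * π * (j+1:ℕ) / n)..π, η s / s)
        = -∫ s in (2 * π * j / n)..(2 * π * (j+1:ℕ) / n), η s / s := by
      rw [← hadd]; ring
    rw [hdiff, abs_neg]
    have hIc : IntervalIntegrable (fun s => ηs (2 * π * m / n) * (1/s)) volume
        (2 * π * j / n) (2 * π * (j+1:ℕ) / n) := by
      apply IntervalIntegrable.const_mul
      apply intervalIntegral.intervalIntegrable_one_div (f := fun s : ℝ => s) ?_ continuousOn_id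
      intro x hx
      rw [uIcc_of_le hab] at hx
      exact ne_of_gt (lt_of_lt_of_le hxj hx.1)
    have hpt : ∀ s ∈ Icc (2 * π * j / n) (2 * π * (j+1:ℕ) / n),
        |η s / s| ≤ ηs (2 * π * m / n) * (1/s) := by
      intro s hs
      have hs0 : 0 < s := lt_of_lt_of_le hxj hs.1
      have hsm : s ≤ 2 * π * m / n := le_trans hs.2 (hxmono (j+1) m hjm)
      have hsπ : s ≤ π := le_trans hsm hxmπ
      have h1 : |η s| ≤ ηs (2 * π * m / n) :=
        le_trans (hηle s ⟨hs0, hsπ⟩) (hmono ⟨hs0, hsπ⟩ (hxmem m hm le_rfl) hsm)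
      rw [abs_div, abs_of_pos hs0, mul_one_div]
      exact (div_le_div_iff_of_pos_right hs0).mpr h1
    calc |∫ s in (2 * π * j / n)..(2 * π * (j+1:ℕ) / n), η s / s|
        ≤ ∫ s in (2 * π * j / n)..(2 * π * (j+1:ℕ) / n), |η s / s| :=
          intervalIntegral.abs_integral_le_integral_abs hab
      _ ≤ ∫ s in (2 * π * j / n)..(2 * π * (j+1:ℕ) / n), ηs (2 * π * m / n) * (1/s) :=
          intervalIntegral.integral_mono_on hab hI1.abs hIc hpt
      _ = ηs (2 * π * m / n) * ∫ s in (2 * π * j / n)..(2 * π * (j+1:ℕ) / n), 1/s :=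
          intervalIntegral.integral_const_mul _ _
      _ = ηs (2 * π * m / n) * Real.log ((2 * π * (j+1:ℕ) / n) / (2 * π * j / n)) := by
          rw [integral_one_div_of_pos hxj hxj1]
      _ ≤ ηs (2 * π * m / n) * (1/(j:ℝ)) := by
          apply mul_le_mul_of_nonneg_left ?_ hc0
          have hratio : (2 * π * (j+1:ℕ) / n) / (2 * π * j / n) = ((j:ℝ)+1)/(j:ℝ) := by
            push_cast
            field_simp
          rw [hratio, Real.log_div (by positivity) (ne_of_gt hj0)]
          exact (log_succ_sub j hj).2
  -- put everything together
  have hterm : ∀ j ∈ Finset.Ico 1 m,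
      |(∑ i ∈ Finset.Icc 1 j, (Real.log (i:ℝ) - (1 / (m : ℝ)) * L)) *
          ((-∫ s in (2 * π * j / n)..π, η s / s) -
            (-∫ s in (2 * π * (j+1 : ℕ) / n)..π, η s / s))|
        ≤ ηs (2 * π * m / n) * (lm - Real.log (j:ℝ))
          + ((1 + lm) * ηs (2 * π * m / n)) * (1/(j:ℝ)) := by
    intro j hj
    rw [Finset.mem_Ico] at hj
    have hj1 : 1 ≤ j := hj.1
    have hjm : j ≤ m := le_of_lt hj.2
    have hj0 : (0:ℝ) < j := by exact_mod_cast hj1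
    have hljm : Real.log (j:ℝ) ≤ lm := Real.log_le_log hj0 (by exact_mod_cast hjm)
    have hB0 : 0 ≤ (j:ℝ) * (lm - Real.log (j:ℝ)) + (1 + lm) := by
      have := Real.log_natCast_nonneg j
      nlinarith
    rw [abs_mul]
    calc |∑ i ∈ Finset.Icc 1 j, (Real.log (i:ℝ) - (1 / (m : ℝ)) * L)| *
          |(-∫ s in (2 * π * j / n)..π, η s / s) -
            (-∫ s in (2 * π * (j+1 : ℕ) / n)..π, η s / s)|
        ≤ ((j:ℝ) * (lm - Real.log (j:ℝ)) + (1 + lm)) * (ηs (2 * π * m / n) * (1/(j:ℝ))) :=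
          mul_le_mul (hSabs j hj1 hjm) (hd j hj1 hj.2) (abs_nonneg _) hB0
      _ = ηs (2 * π * m / n) * (lm - Real.log (j:ℝ))
            + ((1 + lm) * ηs (2 * π * m / n)) * (1/(j:ℝ)) := by
          field_simp
  have hsum1 : ∑ j ∈ Finset.Ico 1 m, (lm - Real.log (j:ℝ)) ≤ (m:ℝ) - 1 := by
    have hsub : ∑ j ∈ Finset.Ico 1 m, (lm - Real.log (j:ℝ))
        ≤ ∑ j ∈ Finset.Icc 1 m, (lm - Real.log (j:ℝ)) := by
      apply Finset.sum_le_sum_of_subset_of_nonneg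
      · intro j hj
        rw [Finset.mem_Ico] at hj
        rw [Finset.mem_Icc]
        omega
      · intro j hj _
        rw [Finset.mem_Icc] at hj
        have hj0 : (0:ℝ) < j := by exact_mod_cast hj.1
        have : Real.log (j:ℝ) ≤ lm := Real.log_le_log hj0 (by exact_mod_cast hj.2)
        linarith
    have heq : ∑ j ∈ Finset.Icc 1 m, (lm - Real.log (j:ℝ)) = (m:ℝ) * lm - L := by
      rw [Finset.sum_sub_distrib, Finset.sum_const, Nat.card_Icc, ← hL]
      simp only [Nat.add_sub_cancel, nsmul_eq_mul]
    have hB1 := log_fact_lower m hm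
    rw [← hL, ← hlm] at hB1
    rw [heq] at hsub
    linarith
  have hsum2 : ∑ j ∈ Finset.Ico 1 m, (1:ℝ)/(j:ℝ) ≤ 1 + lm := by
    have hsub : ∑ j ∈ Finset.Ico 1 m, (1:ℝ)/(j:ℝ)
        ≤ ∑ j ∈ Finset.Icc 1 m, (1:ℝ)/(j:ℝ) := by
      apply Finset.sum_le_sum_of_subset_of_nonneg
      · intro j hj
        rw [Finset.mem_Ico] at hj
        rw [Finset.mem_Icc]
        omega
      · intro j _ _
        positivity
    exact le_trans hsub (harmonic_le m hm)
  have hmain : |∑ j ∈ Finset.Ico 1 m,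
      (∑ i ∈ Finset.Icc 1 j, (Real.log (i:ℝ) - (1 / (m : ℝ)) * L)) *
        ((-∫ s in (2 * π * j / n)..π, η s / s) -
          (-∫ s in (2 * π * (j+1 : ℕ) / n)..π, η s / s))|
      ≤ ηs (2 * π * m / n) * ((m:ℝ) - 1) + ((1 + lm) * ηs (2 * π * m / n)) * (1 + lm) := by
    calc |∑ j ∈ Finset.Ico 1 m,
        (∑ i ∈ Finset.Icc 1 j, (Real.log (i:ℝ) - (1 / (m : ℝ)) * L)) *
          ((-∫ s in (2 * π * j / n)..π, η s / s) -
            (-∫ s in (2 * π * (j+1 : ℕ) / n)..π, η s / s))|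
        ≤ ∑ j ∈ Finset.Ico 1 m,
            |(∑ i ∈ Finset.Icc 1 j, (Real.log (i:ℝ) - (1 / (m : ℝ)) * L)) *
              ((-∫ s in (2 * π * j / n)..π, η s / s) -
                (-∫ s in (2 * π * (j+1 : ℕ) / n)..π, η s / s))| :=
          Finset.abs_sum_le_sum_abs _ _
      _ ≤ ∑ j ∈ Finset.Ico 1 m,
            (ηs (2 * π * m / n) * (lm - Real.log (j:ℝ))
              + ((1 + lm) * ηs (2 * π * m / n)) * (1/(j:ℝ))) :=
          Finset.sum_le_sum hterm
      _ = ηs (2 * π * m / n) * (∑ j ∈ Finset.Ico 1 m, (lm - Real.log (j:ℝ)))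
            + ((1 + lm) * ηs (2 * π * m / n)) * (∑ j ∈ Finset.Ico 1 m, (1:ℝ)/(j:ℝ)) := by
          rw [Finset.sum_add_distrib, Finset.mul_sum, Finset.mul_sum]
      _ ≤ ηs (2 * π * m / n) * ((m:ℝ) - 1) + ((1 + lm) * ηs (2 * π * m / n)) * (1 + lm) := by
          have h1 : 0 ≤ (1 + lm) * ηs (2 * π * m / n) := by positivity
          gcongr
  -- nonnegativity of the majorant integral
  have hI0 : 0 ≤ ∫ s in (2 * π * m / n)..π, ηs s / s := by
    apply intervalIntegral.integral_nonneg hxmπ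
    intro u hu
    have hu0 : 0 < u := lt_of_lt_of_le (hxpos m hm) hu.1
    exact div_nonneg (hηs_nonneg u ⟨hu0, hu.2⟩) hu0.le
  refine le_trans hmain ?_
  -- final numeric bound
  rcases eq_or_lt_of_le hm with hm1 | hm2
  · have : m = 1 := hm1.symm
    subst this
    have hlm1 : lm = 0 := by rw [hlm]; norm_num
    rw [hlm1]
    push_cast
    nlinarith [hI0, hc0]
  · have hm2' : (2:ℕ) ≤ m := hm2
    have hlog2 : Real.log 2 ≤ lm := by
      rw [hlm]
      exact Real.log_le_log (by norm_num) (by exact_mod_cast hm2')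
    have hlog2' : (0.6931471803:ℝ) < Real.log 2 := Real.log_two_gt_d9
    have hkey : 0 ≤ ηs (2 * π * m / n) * (lm * (4 * lm - 1)) := by
      apply mul_nonneg hc0
      apply mul_nonneg hlm0
      linarith
    nlinarith [mul_nonneg hlm0 hI0, hc0, hkey]
end
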